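/- Let (X, d) be a finite set with a distance function, n = |X| ≥ 3, m_2 = max_{x,y} d(x,y)², and let S ⊆ X with 2 ≤ |S| ≤ k, where 1 < k < |X|. For W ≥ 1 let w_W be the weight function with w_W(x) = W for x ∈ S and w_W(x) = 1 otherwise. If C is a k-clustering of X in which all elements of S lie in pairwise distinct clusters, then the k-means cost of C with respect to (w_W[X], d) is at most k·m_2·(n + n²/W). -/

import Mathlib

open Finset

/-- A weight function assigns a positive real weight to every point. -/
def IsWeight {X : Type*} (w : X → ℝ) : Prop := ∀ x, 0 < w x

/-- A k-clustering: a partition of `X` into `k` pairwise disjoint nonempty parts. -/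
def IsClustering {X : Type*} [Fintype X] [DecidableEq X]
    (C : Finset (Finset X)) (k : ℕ) : Prop :=
  C.card = k ∧ (∀ A ∈ C, A.Nonempty) ∧
  (∀ A ∈ C, ∀ B ∈ C, A ≠ B → Disjoint A B) ∧
  (∀ x : X, ∃ A ∈ C, x ∈ A)

/-- `x ∼_C y`: `x` and `y` lie in the same cluster of `C`. -/
def SameCluster {X : Type*} [DecidableEq X] (C : Finset (Finset X)) (x y : X) : Prop :=
  ∃ A ∈ C, x ∈ A ∧ y ∈ A

/-- The k-means cost of a clustering `C` of weighted data `(w[X], d)`: for each cluster, the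
sum over unordered pairs of distinct points of `d(x,y)² w(x) w(y)` (written as half the sum
over ordered pairs of distinct points), divided by the cluster weight. -/
noncomputable def kmeansCost {X : Type*} [DecidableEq X]
    (C : Finset (Finset X)) (w : X → ℝ) (d : X → X → ℝ) : ℝ :=
  ∑ A ∈ C, ((1 / 2) * ∑ p ∈ A.offDiag, d p.1 p.2 ^ 2 * w p.1 * w p.2) / (∑ x ∈ A, w x)

/-- The min-sum cost of a clustering `C` of weighted data `(w[X], d)`: the sum over clusters
of the sum over unordered pairs of distinct points of `d(x,y) w(x) w(y)`. -/
noncomputable def minSumCost {X : Type*} [DecidableEq X]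
    (C : Finset (Finset X)) (w : X → ℝ) (d : X → X → ℝ) : ℝ :=
  ∑ A ∈ C, (1 / 2) * ∑ p ∈ A.offDiag, d p.1 p.2 * w p.1 * w p.2

theorem kmeans_aux {X : Type*} [Fintype X] [DecidableEq X] (d : X → X → ℝ)
    (k : ℕ) (S : Finset X) (C : Finset (Finset X)) (hC : IsClustering C k)
    (hone : ∀ A ∈ C, ∀ x ∈ A, x ∈ S → ∀ y ∈ A, y ∈ S → x = y)
    (W : ℝ) (hW : 1 ≤ W) (M : ℝ) (hM0 : 0 ≤ M) (hM : ∀ x y, d x y ^ 2 ≤ M) :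
    kmeansCost C (fun z => if z ∈ S then W else 1) d
      ≤ (k : ℝ) * M * ((Fintype.card X : ℝ) + (Fintype.card X : ℝ) ^ 2 / W) := by
  classical
  set w : X → ℝ := fun z => if z ∈ S then W else 1 with hw
  have hW0 : 0 < W := lt_of_lt_of_le one_pos hW
  have hw1 : ∀ x, 1 ≤ w x := by
    intro x; simp only [hw]; split
    · exact hW
    · exact le_refl 1
  have hw0 : ∀ x, 0 < w x := fun x => lt_of_lt_of_le one_pos (hw1 x)
  set n : ℝ := (Fintype.card X : ℝ) with hn
  have hn0 : 0 ≤ n := by positivity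
  have hcardA : ∀ A : Finset X, (A.card : ℝ) ≤ n := by
    intro A; rw [hn]; exact_mod_cast A.card_le_univ
  have hB0 : 0 ≤ n + n ^ 2 / W := by positivity
  have hbound : ∀ A ∈ C,
      ((1 / 2) * ∑ p ∈ A.offDiag, d p.1 p.2 ^ 2 * w p.1 * w p.2) / (∑ x ∈ A, w x)
        ≤ M * (n + n ^ 2 / W) := by
    intro A hA
    have hAne : A.Nonempty := hC.2.1 A hA
    have hSA : 0 < ∑ x ∈ A, w x := Finset.sum_pos (fun x _ => hw0 x) hAne
    rw [div_le_iff₀ hSA]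
    have hone' : ∀ x ∈ A, x ∈ S → ∀ y ∈ A, y ∈ S → x = y := hone A hA
    have hoffcard : (A.offDiag.card : ℝ) ≤ n * (A.card : ℝ) := by
      have h1 : A.offDiag.card ≤ A.card * A.card := by
        rw [Finset.offDiag_card]; exact Nat.sub_le _ _
      have h2 : (A.offDiag.card : ℝ) ≤ (A.card : ℝ) * (A.card : ℝ) := by exact_mod_cast h1
      nlinarith [hcardA A, Nat.cast_nonneg (α := ℝ) A.card]
    have step2 : ∑ p ∈ A.offDiag, w p.1 * w p.2
        ≤ 2 * (n + n ^ 2 / W) * (∑ x ∈ A, w x) := by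
      by_cases hAS : ∃ s ∈ A, s ∈ S
      · obtain ⟨s, hsA, hsS⟩ := hAS
        have hSAW : W ≤ ∑ x ∈ A, w x := by
          have : w s = W := by simp [hw, hsS]
          calc W = w s := this.symm
            _ ≤ ∑ x ∈ A, w x :=
              Finset.single_le_sum (fun x _ => le_of_lt (hw0 x)) hsA
        set χ : X → ℝ := fun x => if x ∈ S then 1 else 0 with hχ
        have hχ0 : ∀ x, 0 ≤ χ x := by
          intro x; simp only [hχ]; split <;> norm_num
        have hterm : ∀ p ∈ A.offDiag, w p.1 * w p.2 ≤ W * (χ p.1 + χ p.2) + 1 := by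
          intro p hp
          obtain ⟨h1, h2, hne⟩ := Finset.mem_offDiag.mp hp
          by_cases c1 : p.1 ∈ S <;> by_cases c2 : p.2 ∈ S
          · exact absurd (hone' p.1 h1 c1 p.2 h2 c2) hne
          · have e1 : w p.1 = W := by simp [hw, c1]
            have e2 : w p.2 = 1 := by simp [hw, c2]
            have f1 : χ p.1 = 1 := by simp [hχ, c1]
            have f2 : χ p.2 = 0 := by simp [hχ, c2]
            rw [e1, e2, f1, f2]; linarith
          · have e1 : w p.1 = 1 := by simp [hw, c1]
            have e2 : w p.2 = W := by simp [hw, c2]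
            have f1 : χ p.1 = 0 := by simp [hχ, c1]
            have f2 : χ p.2 = 1 := by simp [hχ, c2]
            rw [e1, e2, f1, f2]; linarith
          · have e1 : w p.1 = 1 := by simp [hw, c1]
            have e2 : w p.2 = 1 := by simp [hw, c2]
            have f1 : χ p.1 = 0 := by simp [hχ, c1]
            have f2 : χ p.2 = 0 := by simp [hχ, c2]
            rw [e1, e2, f1, f2]; linarith
        have hchisum : ∑ x ∈ A, χ x ≤ 1 := by
          have hfc : (A.filter (· ∈ S)).card ≤ 1 := by
            apply Finset.card_le_one.mpr
            intro a ha b hb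
            rw [Finset.mem_filter] at ha hb
            exact hone' a ha.1 ha.2 b hb.1 hb.2
          have : ∑ x ∈ A, χ x = ((A.filter (· ∈ S)).card : ℝ) := by
            simp only [hχ]
            rw [Finset.sum_ite, Finset.sum_const, Finset.sum_const]
            simp
          rw [this]; exact_mod_cast hfc
        have hchisum0 : 0 ≤ ∑ x ∈ A, χ x := Finset.sum_nonneg fun x _ => hχ0 x
        have hsub : A.offDiag ⊆ A ×ˢ A := by
          intro p hp
          obtain ⟨h1, h2, _⟩ := Finset.mem_offDiag.mp hp
          exact Finset.mem_product.mpr ⟨h1, h2⟩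
        have h1sum : ∑ p ∈ A.offDiag, χ p.1 ≤ n := by
          calc ∑ p ∈ A.offDiag, χ p.1 ≤ ∑ p ∈ A ×ˢ A, χ p.1 :=
                Finset.sum_le_sum_of_subset_of_nonneg hsub (fun p _ _ => hχ0 p.1)
            _ = ∑ x ∈ A, ∑ _y ∈ A, χ x := by rw [Finset.sum_product]
            _ = (A.card : ℝ) * ∑ x ∈ A, χ x := by
                rw [Finset.mul_sum]
                exact Finset.sum_congr rfl fun x _ => by
                  rw [Finset.sum_const, nsmul_eq_mul]
            _ ≤ n * 1 := by
                apply mul_le_mul (hcardA A) hchisum hchisum0 hn0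
            _ = n := mul_one n
        have h2sum : ∑ p ∈ A.offDiag, χ p.2 ≤ n := by
          calc ∑ p ∈ A.offDiag, χ p.2 ≤ ∑ p ∈ A ×ˢ A, χ p.2 :=
                Finset.sum_le_sum_of_subset_of_nonneg hsub (fun p _ _ => hχ0 p.2)
            _ = ∑ _x ∈ A, ∑ y ∈ A, χ y := by rw [Finset.sum_product]
            _ = (A.card : ℝ) * ∑ x ∈ A, χ x := by
                rw [Finset.sum_const, nsmul_eq_mul]
            _ ≤ n * 1 := by
                apply mul_le_mul (hcardA A) hchisum hchisum0 hn0
            _ = n := mul_one n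
        have hoff2 : (A.offDiag.card : ℝ) ≤ n ^ 2 := by
          nlinarith [hoffcard, hcardA A, Nat.cast_nonneg (α := ℝ) A.card,
            Nat.cast_nonneg (α := ℝ) A.offDiag.card]
        calc ∑ p ∈ A.offDiag, w p.1 * w p.2
            ≤ ∑ p ∈ A.offDiag, (W * (χ p.1 + χ p.2) + 1) := Finset.sum_le_sum hterm
          _ = W * (∑ p ∈ A.offDiag, χ p.1) + W * (∑ p ∈ A.offDiag, χ p.2)
              + (A.offDiag.card : ℝ) := by
              simp only [mul_add]
              rw [Finset.sum_add_distrib, Finset.sum_add_distrib, ← Finset.mul_sum,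
                ← Finset.mul_sum, Finset.sum_const, nsmul_eq_mul, mul_one]
          _ ≤ W * n + W * n + n ^ 2 := by
              have := mul_le_mul_of_nonneg_left h1sum (le_of_lt hW0)
              have := mul_le_mul_of_nonneg_left h2sum (le_of_lt hW0)
              linarith [hoff2]
          _ ≤ 2 * (n + n ^ 2 / W) * W := by
              have hexp : 2 * (n + n ^ 2 / W) * W = 2 * n * W + 2 * n ^ 2 := by
                field_simp
              rw [hexp]; nlinarith
          _ ≤ 2 * (n + n ^ 2 / W) * (∑ x ∈ A, w x) := by
              apply mul_le_mul_of_nonneg_left hSAW (by positivity)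
      · push_neg at hAS
        have hwone : ∀ x ∈ A, w x = 1 := by
          intro x hx; simp [hw, hAS x hx]
        have hsumA : ∑ x ∈ A, w x = (A.card : ℝ) := by
          rw [Finset.sum_congr rfl hwone]; simp
        have hsumoff : ∑ p ∈ A.offDiag, w p.1 * w p.2 = (A.offDiag.card : ℝ) := by
          have hq : ∀ p ∈ A.offDiag, w p.1 * w p.2 = 1 := by
            intro p hp
            obtain ⟨h1, h2, _⟩ := Finset.mem_offDiag.mp hp
            rw [hwone p.1 h1, hwone p.2 h2, one_mul]
          rw [Finset.sum_congr rfl hq, Finset.sum_const, nsmul_eq_mul, mul_one]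
        rw [hsumoff, hsumA]
        calc (A.offDiag.card : ℝ) ≤ n * (A.card : ℝ) := hoffcard
          _ ≤ 2 * (n + n ^ 2 / W) * (A.card : ℝ) := by
              apply mul_le_mul_of_nonneg_right _ (Nat.cast_nonneg _)
              have : 0 ≤ n ^ 2 / W := by positivity
              linarith
    have step1 : ∑ p ∈ A.offDiag, d p.1 p.2 ^ 2 * w p.1 * w p.2
        ≤ M * ∑ p ∈ A.offDiag, w p.1 * w p.2 := by
      rw [Finset.mul_sum]
      apply Finset.sum_le_sum
      intro p _
      nlinarith [hM p.1 p.2, mul_pos (hw0 p.1) (hw0 p.2), hw0 p.1, hw0 p.2]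
    calc (1 / 2) * ∑ p ∈ A.offDiag, d p.1 p.2 ^ 2 * w p.1 * w p.2
        ≤ (1 / 2) * (M * ∑ p ∈ A.offDiag, w p.1 * w p.2) := by linarith
      _ ≤ (1 / 2) * (M * (2 * (n + n ^ 2 / W) * (∑ x ∈ A, w x))) := by
          apply mul_le_mul_of_nonneg_left _ (by norm_num)
          exact mul_le_mul_of_nonneg_left step2 hM0
      _ = M * (n + n ^ 2 / W) * (∑ x ∈ A, w x) := by ring
  calc kmeansCost C w d ≤ ∑ _A ∈ C, M * (n + n ^ 2 / W) := by
        rw [kmeansCost]; exact Finset.sum_le_sum hbound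
    _ = (k : ℝ) * M * (n + n ^ 2 / W) := by
        rw [Finset.sum_const, hC.1, nsmul_eq_mul]; ring

/-- with weight `W ≥ 1` on the points of `S` and weight `1` elsewhere, any
k-clustering in which the elements of `S` lie in pairwise distinct clusters has k-means cost
at most `k · m₂ · (n + n²/W)`, where `n = |X| ≥ 3` and `m₂ = max_{x,y} d(x,y)²`. -/
theorem kmeansCost_upper_bound_of_separated
    {X : Type*} [Fintype X] [DecidableEq X]
    (d : X → X → ℝ) (hsym : ∀ x y, d x y = d y x) (hnn : ∀ x y, 0 ≤ d x y)
    (hzero : ∀ x y, d x y = 0 ↔ x = y)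
    (hn : 3 ≤ Fintype.card X)
    (k : ℕ) (hk1 : 1 < k) (hk2 : k < Fintype.card X)
    (S : Finset X) (hS1 : 2 ≤ S.card) (hS2 : S.card ≤ k)
    (C : Finset (Finset X)) (hC : IsClustering C k)
    (hsep : ∀ x ∈ S, ∀ y ∈ S, x ≠ y → ¬ SameCluster C x y)
    (W : ℝ) (hW : 1 ≤ W) :
    kmeansCost C (fun z => if z ∈ S then W else 1) d
      ≤ (k : ℝ) *
          ((Finset.univ : Finset (X × X)).sup'
            (by
              have : Nonempty X := Fintype.card_pos_iff.mp (by omega)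
              exact Finset.univ_nonempty)
            (fun p => d p.1 p.2 ^ 2)) *
          ((Fintype.card X : ℝ) + (Fintype.card X : ℝ) ^ 2 / W) := by
  
  have hXne : Nonempty X := Fintype.card_pos_iff.mp (by omega)
  obtain ⟨x0⟩ := hXne
  have hone : ∀ A ∈ C, ∀ x ∈ A, x ∈ S → ∀ y ∈ A, y ∈ S → x = y := by
    intro A hA x hx hxS y hy hyS
    by_contra hne
    exact hsep x hxS y hyS hne ⟨A, hA, hx, hy⟩
  have hXX : Nonempty (X × X) := ⟨(x0, x0)⟩
  have hne : ((Finset.univ : Finset (X × X))).Nonempty := Finset.univ_nonempty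
  have hM : ∀ x y : X, d x y ^ 2 ≤
      (Finset.univ : Finset (X × X)).sup' hne (fun p => d p.1 p.2 ^ 2) := by
    intro x y
    exact Finset.le_sup' (fun p : X × X => d p.1 p.2 ^ 2) (Finset.mem_univ (x, y))
  have hM0 : (0 : ℝ) ≤ (Finset.univ : Finset (X × X)).sup' hne (fun p => d p.1 p.2 ^ 2) := by
    have h := hM x0 x0
    have : d x0 x0 = 0 := (hzero x0 x0).mpr rfl
    rw [this] at h
    simpa using h
  exact kmeans_aux d k S C hC hone W hW _ hM0 hM
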